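/- For every n ≥ 0, almost surely on the event {ζ₁(n) ≥ 1 and ζ₂(n) ≥ 1}: E[S_{n+1} − S_n | 𝓕_n] = ρ̃ + (2λ₁β₂(α₂+β₁) + 2λ₂β₁(α₁+β₂))/R_n; in particular this conditional drift is at least ρ̃ on that event. -/

import Mathlib

open MeasureTheory Filter

/-- Drift of `Sₙ` in the interior. For the discrete-time competition
process with linear interaction, for every `n`, almost surely on the event
`{ζ₁(n) ≥ 1 and ζ₂(n) ≥ 1}`,
`E[S_{n+1} − Sₙ | ℱ n] = ρ̃ + (2λ₁β₂(α₂+β₁) + 2λ₂β₁(α₁+β₂))/Rₙ ≥ ρ̃`. -/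
theorem stmt_9
    {Ω : Type*} {m0 : MeasurableSpace Ω} (P : Measure Ω) [IsProbabilityMeasure P]
    (ℱ : Filtration ℕ m0)
    (l₁ l₂ β₁ β₂ α₁ α₂ : ℝ)
    (hl₁ : 0 < l₁) (hl₂ : 0 < l₂) (hβ₁ : 0 < β₁) (hβ₂ : 0 < β₂)
    (hα₁ : 0 ≤ α₁) (hα₂ : 0 ≤ α₂)
    (ζ₁ ζ₂ : ℕ → Ω → ℕ)
    (hζ₁meas : ∀ n, Measurable[ℱ n] (ζ₁ n)) (hζ₂meas : ∀ n, Measurable[ℱ n] (ζ₂ n))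
    (x₀ y₀ : ℕ) (hinit : ∀ ω, ζ₁ 0 ω = x₀ ∧ ζ₂ 0 ω = y₀)
    (hstep : ∀ n, ∀ᵐ ω ∂P,
      (ζ₁ (n + 1) ω = ζ₁ n ω + 1 ∧ ζ₂ (n + 1) ω = ζ₂ n ω) ∨
      (ζ₁ (n + 1) ω = ζ₁ n ω ∧ ζ₂ (n + 1) ω = ζ₂ n ω + 1) ∨
      (ζ₁ (n + 1) ω + 1 = ζ₁ n ω ∧ ζ₂ (n + 1) ω = ζ₂ n ω) ∨
      (ζ₁ (n + 1) ω = ζ₁ n ω ∧ ζ₂ (n + 1) ω + 1 = ζ₂ n ω))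
    (W : ℕ → Ω → ℝ)
    (hW : ∀ n ω, W n ω =
      (l₁ + α₁ * (ζ₁ n ω : ℝ)) + (l₂ + α₂ * (ζ₂ n ω : ℝ)) +
      (if 1 ≤ ζ₁ n ω then β₁ * (ζ₂ n ω : ℝ) else 0) +
      (if 1 ≤ ζ₂ n ω then β₂ * (ζ₁ n ω : ℝ) else 0))
    (hright : ∀ n,
      P[({ω' | ζ₁ (n + 1) ω' = ζ₁ n ω' + 1 ∧ ζ₂ (n + 1) ω' = ζ₂ n ω'} : Set Ω).indicator
          (fun _ => (1 : ℝ)) | ℱ n]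
        =ᵐ[P] fun ω => (l₁ + α₁ * (ζ₁ n ω : ℝ)) / W n ω)
    (hupp : ∀ n,
      P[({ω' | ζ₁ (n + 1) ω' = ζ₁ n ω' ∧ ζ₂ (n + 1) ω' = ζ₂ n ω' + 1} : Set Ω).indicator
          (fun _ => (1 : ℝ)) | ℱ n]
        =ᵐ[P] fun ω => (l₂ + α₂ * (ζ₂ n ω : ℝ)) / W n ω)
    (hleft : ∀ n,
      P[({ω' | ζ₁ (n + 1) ω' + 1 = ζ₁ n ω' ∧ ζ₂ (n + 1) ω' = ζ₂ n ω'} : Set Ω).indicator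
          (fun _ => (1 : ℝ)) | ℱ n]
        =ᵐ[P] fun ω => (if 1 ≤ ζ₁ n ω then β₁ * (ζ₂ n ω : ℝ) else 0) / W n ω)
    (hdownp : ∀ n,
      P[({ω' | ζ₁ (n + 1) ω' = ζ₁ n ω' ∧ ζ₂ (n + 1) ω' + 1 = ζ₂ n ω'} : Set Ω).indicator
          (fun _ => (1 : ℝ)) | ℱ n]
        =ᵐ[P] fun ω => (if 1 ≤ ζ₂ n ω then β₂ * (ζ₁ n ω : ℝ) else 0) / W n ω)
    (R : ℕ → Ω → ℝ)
    (hR : ∀ n ω, R n ω = (α₁ + β₂) * (ζ₁ n ω : ℝ) + (α₂ + β₁) * (ζ₂ n ω : ℝ) + l₁ + l₂)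
    (S : ℕ → Ω → ℝ)
    (hS : ∀ n ω, S n ω = (α₁ * α₂ + β₁ * β₂ + 2 * α₂ * β₂) * (ζ₁ n ω : ℝ) +
      (α₁ * α₂ + β₁ * β₂ + 2 * α₁ * β₁) * (ζ₂ n ω : ℝ)) :
    ∀ n, ∀ᵐ ω ∂P, 1 ≤ ζ₁ n ω → 1 ≤ ζ₂ n ω →
      (P[(fun ω' => S (n + 1) ω' - S n ω') | ℱ n]) ω =
        (α₁ * α₂ - β₁ * β₂) +
          (2 * l₁ * β₂ * (α₂ + β₁) + 2 * l₂ * β₁ * (α₁ + β₂)) / R n ω ∧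
      (α₁ * α₂ - β₁ * β₂) ≤ (P[(fun ω' => S (n + 1) ω' - S n ω') | ℱ n]) ω := by
  intro n
  classical
  set A : ℝ := α₁ * α₂ + β₁ * β₂ + 2 * α₂ * β₂ with hA
  set B : ℝ := α₁ * α₂ + β₁ * β₂ + 2 * α₁ * β₁ with hB
  have hm1 : Measurable (ζ₁ n) := (hζ₁meas n).mono (ℱ.le n) le_rfl
  have hm2 : Measurable (ζ₂ n) := (hζ₂meas n).mono (ℱ.le n) le_rfl
  have hm1' : Measurable (ζ₁ (n + 1)) := (hζ₁meas (n + 1)).mono (ℱ.le (n + 1)) le_rfl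
  have hm2' : Measurable (ζ₂ (n + 1)) := (hζ₂meas (n + 1)).mono (ℱ.le (n + 1)) le_rfl
  set sR : Set Ω := {ω' | ζ₁ (n + 1) ω' = ζ₁ n ω' + 1 ∧ ζ₂ (n + 1) ω' = ζ₂ n ω'} with hsR
  set sU : Set Ω := {ω' | ζ₁ (n + 1) ω' = ζ₁ n ω' ∧ ζ₂ (n + 1) ω' = ζ₂ n ω' + 1} with hsU
  set sL : Set Ω := {ω' | ζ₁ (n + 1) ω' + 1 = ζ₁ n ω' ∧ ζ₂ (n + 1) ω' = ζ₂ n ω'} with hsL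
  set sD : Set Ω := {ω' | ζ₁ (n + 1) ω' = ζ₁ n ω' ∧ ζ₂ (n + 1) ω' + 1 = ζ₂ n ω'} with hsD
  have hmsR : MeasurableSet sR :=
    (measurableSet_eq_fun hm1' (hm1.add measurable_const)).inter
      (measurableSet_eq_fun hm2' hm2)
  have hmsU : MeasurableSet sU :=
    (measurableSet_eq_fun hm1' hm1).inter
      (measurableSet_eq_fun hm2' (hm2.add measurable_const))
  have hmsL : MeasurableSet sL :=
    (measurableSet_eq_fun (hm1'.add measurable_const) hm1).inter
      (measurableSet_eq_fun hm2' hm2)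
  have hmsD : MeasurableSet sD :=
    (measurableSet_eq_fun hm1' hm1).inter
      (measurableSet_eq_fun (hm2'.add measurable_const) hm2)
  set gR : Ω → ℝ := sR.indicator (fun _ => (1 : ℝ)) with hgR
  set gU : Ω → ℝ := sU.indicator (fun _ => (1 : ℝ)) with hgU
  set gL : Ω → ℝ := sL.indicator (fun _ => (1 : ℝ)) with hgL
  set gD : Ω → ℝ := sD.indicator (fun _ => (1 : ℝ)) with hgD
  have hiR : Integrable gR P := (integrable_const (1 : ℝ)).indicator hmsR
  have hiU : Integrable gU P := (integrable_const (1 : ℝ)).indicator hmsU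
  have hiL : Integrable gL P := (integrable_const (1 : ℝ)).indicator hmsL
  have hiD : Integrable gD P := (integrable_const (1 : ℝ)).indicator hmsD
  -- pointwise identification of the increment of S
  have h1 : (fun ω' => S (n + 1) ω' - S n ω') =ᵐ[P]
      fun ω => A * gR ω + B * gU ω - A * gL ω - B * gD ω := by
    filter_upwards [hstep n] with ω hω
    have exR : gR ω = if ω ∈ sR then 1 else 0 := Set.indicator_apply sR _ ω
    have exU : gU ω = if ω ∈ sU then 1 else 0 := Set.indicator_apply sU _ ω
    have exL : gL ω = if ω ∈ sL then 1 else 0 := Set.indicator_apply sL _ ω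
    have exD : gD ω = if ω ∈ sD then 1 else 0 := Set.indicator_apply sD _ ω
    rcases hω with h | h | h | h
    · have m1 : ω ∈ sR := h
      have m2 : ω ∉ sU := fun hc => by have := hc.1; omega
      have m3 : ω ∉ sL := fun hc => by have := hc.1; omega
      have m4 : ω ∉ sD := fun hc => by have := hc.2; omega
      rw [exR, exU, exL, exD, if_pos m1, if_neg m2, if_neg m3, if_neg m4,
        hS (n + 1), hS n, h.1, h.2]
      push_cast; ring
    · have m1 : ω ∉ sR := fun hc => by have := hc.1; omega
      have m2 : ω ∈ sU := h
      have m3 : ω ∉ sL := fun hc => by have := hc.1; omega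
      have m4 : ω ∉ sD := fun hc => by have := hc.2; omega
      rw [exR, exU, exL, exD, if_neg m1, if_pos m2, if_neg m3, if_neg m4,
        hS (n + 1), hS n, h.1, h.2]
      push_cast; ring
    · have m1 : ω ∉ sR := fun hc => by have := hc.1; omega
      have m2 : ω ∉ sU := fun hc => by have h2 := hc.2; have := h.2; omega
      have m3 : ω ∈ sL := h
      have m4 : ω ∉ sD := fun hc => by have := hc.2; have := h.2; omega
      rw [exR, exU, exL, exD, if_neg m1, if_neg m2, if_pos m3, if_neg m4,
        hS (n + 1), hS n, ← h.1, h.2]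
      push_cast; ring
    · have m1 : ω ∉ sR := fun hc => by have := hc.1; have := h.1; omega
      have m2 : ω ∉ sU := fun hc => by have := hc.2; omega
      have m3 : ω ∉ sL := fun hc => by have := hc.1; have := h.1; omega
      have m4 : ω ∈ sD := h
      rw [exR, exU, exL, exD, if_neg m1, if_neg m2, if_neg m3, if_pos m4,
        hS (n + 1), hS n, h.1, ← h.2]
      push_cast; ring
  -- conditional expectation via linearity
  have hlin : P[(fun ω' => S (n + 1) ω' - S n ω') | ℱ n] =ᵐ[P]
      fun ω => A * (P[gR | ℱ n]) ω + B * (P[gU | ℱ n]) ω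
        - A * (P[gL | ℱ n]) ω - B * (P[gD | ℱ n]) ω := by
    have e1 : (fun ω => A * gR ω + B * gU ω - A * gL ω - B * gD ω)
        = ((A • gR + B • gU) - A • gL) - B • gD := by
      funext ω; simp [Pi.add_apply, Pi.sub_apply, smul_eq_mul]
    calc P[(fun ω' => S (n + 1) ω' - S n ω') | ℱ n]
        =ᵐ[P] P[((A • gR + B • gU) - A • gL) - B • gD | ℱ n] := by
          refine condExp_congr_ae ?_
          rw [← e1]; exact h1
      _ =ᵐ[P] fun ω => A * (P[gR | ℱ n]) ω + B * (P[gU | ℱ n]) ω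
          - A * (P[gL | ℱ n]) ω - B * (P[gD | ℱ n]) ω := by
          have cR := condExp_smul (μ := P) (m := ℱ n) A gR
          have cU := condExp_smul (μ := P) (m := ℱ n) B gU
          have cL := condExp_smul (μ := P) (m := ℱ n) A gL
          have cD := condExp_smul (μ := P) (m := ℱ n) B gD
          have s1 := condExp_add (μ := P) (m := ℱ n) (hiR.smul A) (hiU.smul B)
          have s2 := condExp_sub (μ := P) (m := ℱ n)
            ((hiR.smul A).add (hiU.smul B)) (hiL.smul A)
          have s3 := condExp_sub (μ := P) (m := ℱ n)
            (((hiR.smul A).add (hiU.smul B)).sub (hiL.smul A)) (hiD.smul B)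
          filter_upwards [cR, cU, cL, cD, s1, s2, s3] with ω hR' hU' hL' hD' h1' h2' h3'
          simp only [Pi.add_apply, Pi.sub_apply, Pi.smul_apply, smul_eq_mul] at *
          rw [h3', h2', h1', hR', hU', hL', hD']
  -- combine with the given conditional probabilities and finish
  filter_upwards [hlin, hright n, hupp n, hleft n, hdownp n] with ω hω hrω huω hlω hdω
    hx₁ hx₂
  rw [← hsR] at hrω
  rw [← hsU] at huω
  rw [← hsL] at hlω
  rw [← hsD] at hdω
  have hWR : W n ω = R n ω := by
    rw [hW, hR, if_pos hx₁, if_pos hx₂]; ring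
  have hRpos : 0 < R n ω := by
    rw [hR]
    have h1' : (0 : ℝ) ≤ (α₁ + β₂) * (ζ₁ n ω : ℝ) :=
      mul_nonneg (by linarith) (Nat.cast_nonneg _)
    have h2' : (0 : ℝ) ≤ (α₂ + β₁) * (ζ₂ n ω : ℝ) :=
      mul_nonneg (by linarith) (Nat.cast_nonneg _)
    linarith
  have key : (P[(fun ω' => S (n + 1) ω' - S n ω') | ℱ n]) ω =
      (α₁ * α₂ - β₁ * β₂) +
        (2 * l₁ * β₂ * (α₂ + β₁) + 2 * l₂ * β₁ * (α₁ + β₂)) / R n ω := by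
    have hRne : (α₁ + β₂) * (ζ₁ n ω : ℝ) + (α₂ + β₁) * (ζ₂ n ω : ℝ) + l₁ + l₂ ≠ 0 := by
      rw [← hR]; exact ne_of_gt hRpos
    rw [hω, hrω, huω, hlω, hdω, if_pos hx₁, if_pos hx₂, hWR, hR]
    rw [hA, hB]
    field_simp
    ring
  refine ⟨key, ?_⟩
  rw [key]
  have h01 : (0:ℝ) ≤ 2 * l₁ * β₂ * (α₂ + β₁) :=
    mul_nonneg (by nlinarith) (by linarith)
  have h02 : (0:ℝ) ≤ 2 * l₂ * β₁ * (α₁ + β₂) :=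
    mul_nonneg (by nlinarith) (by linarith)
  have : 0 ≤ (2 * l₁ * β₂ * (α₂ + β₁) + 2 * l₂ * β₁ * (α₁ + β₂)) / R n ω :=
    div_nonneg (by linarith) hRpos.le
  linarith
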